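/- Let q be a prime power, m a positive integer, and α_1,...,α_k ∈ F_{q^m}. Then the determinant of the k×k Moore matrix M with entries M[i][j] = α_j^{q^i} (0 ≤ i ≤ k-1, 1 ≤ j ≤ k) equals α_1 · ∏_{j=1}^{k-1} ∏_{(b_1,...,b_j) ∈ F_q^j} (α_{j+1} - ∑_{i=1}^{j} b_i α_i). In particular, M is invertible if and only if α_1,...,α_k are linearly independent over F_q. -/

import Mathlib

open Finset Polynomial

section MooreAux

variable {Fq K : Type*} [Field Fq] [Fintype Fq] [Field K] [Algebra Fq K]

lemma moore_pow_add (i : ℕ) (x y : K) :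
    (x + y) ^ Fintype.card Fq ^ i = x ^ Fintype.card Fq ^ i + y ^ Fintype.card Fq ^ i := by
  obtain ⟨p, hc⟩ := CharP.exists Fq
  obtain ⟨n, hp, hcard⟩ := FiniteField.card Fq p
  haveI : Fact p.Prime := ⟨hp⟩
  haveI : CharP K p := charP_of_injective_algebraMap (algebraMap Fq K).injective p
  rw [hcard, ← pow_mul, add_pow_char_pow]

lemma moore_pow_smul (i : ℕ) (c : Fq) (x : K) :
    (c • x) ^ Fintype.card Fq ^ i = c • x ^ Fintype.card Fq ^ i := by
  rw [Algebra.smul_def, Algebra.smul_def, mul_pow, ← map_pow, FiniteField.pow_card_pow]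

lemma moore_pow_sum (i : ℕ) {ι : Type*} (s : Finset ι) (f : ι → K) :
    (∑ j ∈ s, f j) ^ Fintype.card Fq ^ i = ∑ j ∈ s, f j ^ Fintype.card Fq ^ i := by
  classical
  induction s using Finset.induction_on with
  | empty => simp [zero_pow, pow_ne_zero, Fintype.card_ne_zero]
  | insert _ _ h ih => rw [Finset.sum_insert h, Finset.sum_insert h, moore_pow_add, ih]

end MooreAux
section MooreAux2

variable {Fq K : Type*} [Field Fq] [Fintype Fq] [Field K] [Algebra Fq K]

lemma moore_det_eq_zero_of_dep (k : ℕ) (α : ℕ → K)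
    (h : ¬ LinearIndependent Fq (fun i : Fin k => α (i:ℕ))) :
    Matrix.det (Matrix.of fun i j : Fin k => α (j:ℕ) ^ Fintype.card Fq ^ (i:ℕ)) = 0 := by
  classical
  rw [Fintype.not_linearIndependent_iff] at h
  obtain ⟨g, hg, i0, hi0⟩ := h
  rw [← Matrix.exists_mulVec_eq_zero_iff]
  refine ⟨fun j => algebraMap Fq K (g j), ?_, ?_⟩
  · intro hv
    exact hi0 (by simpa using congrFun hv i0)
  · funext i
    simp only [Matrix.mulVec, dotProduct, Matrix.of_apply, Pi.zero_apply]
    calc ∑ j : Fin k, α (j:ℕ) ^ Fintype.card Fq ^ (i:ℕ) * algebraMap Fq K (g j)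
        = ∑ j : Fin k, (g j • α (j:ℕ)) ^ Fintype.card Fq ^ (i:ℕ) := by
          refine Finset.sum_congr rfl fun j _ => ?_
          rw [moore_pow_smul, Algebra.smul_def, mul_comm]
      _ = (∑ j : Fin k, g j • α (j:ℕ)) ^ Fintype.card Fq ^ (i:ℕ) :=
          (moore_pow_sum _ _ _).symm
      _ = 0 := by
          rw [hg]
          exact zero_pow (pow_ne_zero _ Fintype.card_ne_zero)

lemma moore_dep_succ (k : ℕ) (α : ℕ → K)
    (h : ¬ LinearIndependent Fq (fun i : Fin k => α (i:ℕ))) :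
    ¬ LinearIndependent Fq (fun i : Fin (k+1) => α (i:ℕ)) :=
  fun h' => h (h'.comp Fin.castSucc (Fin.castSucc_injective k))

end MooreAux2

section MooreStep
variable {Fq K : Type*} [Field Fq] [Fintype Fq] [Field K] [Algebra Fq K]

lemma moore_step (k : ℕ) (α : ℕ → K) :
    Matrix.det (Matrix.of fun i j : Fin (k+1) => α (j:ℕ) ^ Fintype.card Fq ^ (i:ℕ)) =
    Matrix.det (Matrix.of fun i j : Fin k => α (j:ℕ) ^ Fintype.card Fq ^ (i:ℕ)) *
      ∏ b : Fin k → Fq, (α k - ∑ i : Fin k, b i • α (i:ℕ)) := by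
  classical
  by_cases hind : LinearIndependent Fq (fun i : Fin k => α (i:ℕ))
  swap
  · rw [moore_det_eq_zero_of_dep k α hind,
      moore_det_eq_zero_of_dep (k+1) α (moore_dep_succ k α hind), zero_mul]
  set q := Fintype.card Fq with hq
  have hq2 : 2 ≤ q := Fintype.one_lt_card
  have hqi : ∀ i : ℕ, q ^ i ≠ 0 := fun i => pow_ne_zero i (by omega)
  have pow_add' : ∀ (i : ℕ) (x y : K), (x + y) ^ q ^ i = x ^ q ^ i + y ^ q ^ i :=
    fun i x y => moore_pow_add i x y
  have pow_smul' : ∀ (i : ℕ) (c : Fq) (x : K), (c • x) ^ q ^ i = c • x ^ q ^ i :=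
    fun i c x => moore_pow_smul i c x
  set d := Matrix.det (Matrix.of fun i j : Fin k => α (j:ℕ) ^ q ^ (i:ℕ)) with hd
  set A : Fin (k+1) → K := fun i => (-1:K) ^ ((i:ℕ) + k) *
      Matrix.det ((Matrix.of fun i' j' : Fin (k+1) => α (j':ℕ) ^ q ^ (i':ℕ)).submatrix
        i.succAbove (Fin.last k).succAbove) with hA
  set P : K[X] := ∑ i : Fin (k+1), C (A i) * X ^ q ^ (i:ℕ) with hP
  have hPeval : ∀ x : K, P.eval x = ∑ i : Fin (k+1), A i * x ^ q ^ (i:ℕ) := by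
    intro x; rw [hP, eval_finset_sum]; simp
  -- evaluation as determinant
  have hdet : ∀ x : K,
      Matrix.det (Matrix.of fun i j : Fin (k+1) =>
        if (j:ℕ) = k then x ^ q ^ (i:ℕ) else α (j:ℕ) ^ q ^ (i:ℕ)) = P.eval x := by
    intro x
    rw [Matrix.det_succ_column _ (Fin.last k), hPeval]
    refine Finset.sum_congr rfl fun i _ => ?_
    have hmin : (Matrix.of fun i' j' : Fin (k+1) =>
          if (j':ℕ) = k then x ^ q ^ (i':ℕ) else α (j':ℕ) ^ q ^ (i':ℕ)).submatrix
          i.succAbove (Fin.last k).succAbove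
        = (Matrix.of fun i' j' : Fin (k+1) => α (j':ℕ) ^ q ^ (i':ℕ)).submatrix
          i.succAbove (Fin.last k).succAbove := by
      ext l j'
      have hne : (j' : ℕ) ≠ k := Nat.ne_of_lt j'.is_lt
      simp [Matrix.submatrix_apply, Fin.succAbove_last, hne]
    rw [hmin]
    have hcol : (Matrix.of fun i' j' : Fin (k+1) =>
        if (j':ℕ) = k then x ^ q ^ (i':ℕ) else α (j':ℕ) ^ q ^ (i':ℕ)) i (Fin.last k)
        = x ^ q ^ (i:ℕ) := by simp
    rw [hcol, hA]
    simp only [Fin.val_last]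
    ring
  -- roots at α j
  have hroot : ∀ j : Fin k, P.eval (α (j:ℕ)) = 0 := by
    intro j
    rw [← hdet (α (j:ℕ))]
    refine Matrix.det_zero_of_column_eq (M := _) (i := Fin.castSucc j) (j := Fin.last k)
      (Fin.ne_of_lt (Fin.castSucc_lt_last j)) fun r => ?_
    have h1 : ((Fin.castSucc j : Fin (k+1)) : ℕ) ≠ k := Nat.ne_of_lt j.is_lt
    simp [h1]
  have hadd : ∀ x y : K, P.eval (x + y) = P.eval x + P.eval y := by
    intro x y
    simp only [hPeval, pow_add', mul_add, Finset.sum_add_distrib]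
  have hsmul : ∀ (c : Fq) (x : K), P.eval (c • x) = c • P.eval x := by
    intro c x
    simp only [hPeval, pow_smul', Finset.smul_sum, mul_smul_comm]
  have hzero : P.eval 0 = 0 := by
    simp only [hPeval]
    refine Finset.sum_eq_zero fun i _ => ?_
    rw [zero_pow (hqi _), mul_zero]
  have hsum0 : ∀ (s : Finset (Fin k)) (b : Fin k → Fq),
      P.eval (∑ i ∈ s, b i • α (i:ℕ)) = 0 := by
    intro s
    induction s using Finset.induction_on with
    | empty => intro b; simpa using hzero
    | insert _ _ h ih =>
      intro b
      rw [Finset.sum_insert h, hadd, hsmul, hroot, ih, smul_zero, add_zero]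
  have hinj : Function.Injective (fun b : Fin k → Fq => ∑ i : Fin k, b i • α (i:ℕ)) := by
    intro b b' hbb
    have h0 : ∑ i : Fin k, (b i - b' i) • α (i:ℕ) = 0 := by
      simp only [sub_smul, Finset.sum_sub_distrib]
      exact sub_eq_zero.mpr hbb
    funext i
    have := Fintype.linearIndependent_iff.mp hind _ h0 i
    exact sub_eq_zero.mp this
  set V : Finset K := (univ : Finset (Fin k → Fq)).image
    (fun b : Fin k → Fq => ∑ i : Fin k, b i • α (i:ℕ)) with hV
  have hVcard : V.card = q ^ k := by
    rw [hV, Finset.card_image_of_injective _ hinj]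
    simp [Fintype.card_fun, hq]
  -- the comparison polynomial
  set Qm : K[X] := ∏ c ∈ V, (X - C c) with hQm
  have hQmon : Qm.Monic := monic_prod_of_monic _ _ fun c _ => monic_X_sub_C c
  have hQdeg : Qm.natDegree = q ^ k := by
    rw [hQm, Polynomial.natDegree_prod _ _ fun c _ => X_sub_C_ne_zero c]
    simp [hVcard]
  have hPcoeff : ∀ N, P.coeff N = ∑ i : Fin (k+1), if N = q ^ (i:ℕ) then A i else 0 := by
    intro N
    rw [hP, Polynomial.finset_sum_coeff]
    refine Finset.sum_congr rfl fun i _ => ?_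
    rw [Polynomial.coeff_C_mul, Polynomial.coeff_X_pow, mul_ite, mul_one, mul_zero]
  have hPtop : P.coeff (q ^ k) = A (Fin.last k) := by
    rw [hPcoeff]
    have : ∀ i : Fin (k+1), (if (q ^ k = q ^ (i:ℕ)) then A i else 0)
        = (if i = Fin.last k then A i else 0) := by
      intro i
      refine if_congr ?_ rfl rfl
      constructor
      · intro h
        have := Nat.pow_right_injective hq2 h.symm
        exact Fin.ext (by simpa using this)
      · rintro rfl; simp
    rw [Finset.sum_congr rfl fun i _ => this i, Finset.sum_ite_eq' univ (Fin.last k) A,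
      if_pos (Finset.mem_univ _)]
  have hPhigh : ∀ N, q ^ k < N → P.coeff N = 0 := by
    intro N hN
    rw [hPcoeff]
    refine Finset.sum_eq_zero fun i _ => if_neg ?_
    have h1 : q ^ (i:ℕ) ≤ q ^ k := Nat.pow_le_pow_right (by omega) (Nat.lt_succ_iff.mp i.is_lt)
    omega
  have hAlast : A (Fin.last k) = d := by
    rw [hA, hd]
    simp only [Fin.val_last]
    have h1 : ((-1:K)) ^ (k + k) = 1 := by
      rw [← two_mul, pow_mul]; norm_num
    rw [h1, one_mul]
    congr 1
    ext i j
    simp [Fin.succAbove_last, Matrix.submatrix_apply]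
  -- R = P - C d * Qm is zero
  have hR : P - C d * Qm = 0 := by
    by_contra hR0
    have hdeglt : (P - C d * Qm).degree < (q ^ k : ℕ) := by
      rw [Polynomial.degree_lt_iff_coeff_zero]
      intro N hN
      rcases eq_or_lt_of_le hN with h | h
      · rw [Polynomial.coeff_sub, Polynomial.coeff_C_mul, ← h, hPtop, hAlast,
          ← hQdeg, hQmon.coeff_natDegree, mul_one, sub_self]
      · rw [Polynomial.coeff_sub, Polynomial.coeff_C_mul, hPhigh N h,
          Polynomial.coeff_eq_zero_of_natDegree_lt (by omega), mul_zero, sub_self]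
    have hroots : V ⊆ (P - C d * Qm).roots.toFinset := by
      intro c hc
      rw [Multiset.mem_toFinset, Polynomial.mem_roots hR0]
      obtain ⟨b, -, rfl⟩ := Finset.mem_image.mp hc
      have h1 : P.eval (∑ i : Fin k, b i • α (i:ℕ)) = 0 := hsum0 univ b
      have h2 : (C d * Qm).eval (∑ i : Fin k, b i • α (i:ℕ)) = 0 := by
        rw [eval_mul, hQm, eval_prod,
          Finset.prod_eq_zero (Finset.mem_image_of_mem _ (Finset.mem_univ b)) (by rw [eval_sub, eval_X, eval_C, sub_self]),
          mul_zero]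
      show Polynomial.IsRoot _ _
      rw [Polynomial.IsRoot.def, Polynomial.eval_sub, h1, h2, sub_self]
    have hcard : (q ^ k : ℕ) ≤ (P - C d * Qm).natDegree :=
      calc (q ^ k : ℕ) = V.card := hVcard.symm
        _ ≤ (P - C d * Qm).roots.toFinset.card := Finset.card_le_card hroots
        _ ≤ Multiset.card (P - C d * Qm).roots := (P - C d * Qm).roots.toFinset_card_le
        _ ≤ (P - C d * Qm).natDegree := Polynomial.card_roots' _
    have hlt : (P - C d * Qm).natDegree < q ^ k :=
      (Polynomial.natDegree_lt_iff_degree_lt hR0).mpr hdeglt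
    omega
  have hPQ : P = C d * Qm := sub_eq_zero.mp hR
  have hMeq : (Matrix.of fun i j : Fin (k+1) => α (j:ℕ) ^ q ^ (i:ℕ)) =
      Matrix.of (fun i j : Fin (k+1) =>
        if (j:ℕ) = k then (α k) ^ q ^ (i:ℕ) else α (j:ℕ) ^ q ^ (i:ℕ)) := by
    ext i j
    by_cases h : (j:ℕ) = k <;> simp [h]
  rw [hMeq, hdet (α k), hPQ, eval_mul, eval_C, hQm, eval_prod]
  congr 1
  rw [hV, Finset.prod_image fun b _ b' _ h => hinj h]
  refine Finset.prod_congr rfl fun b _ => ?_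
  rw [eval_sub, eval_X, eval_C]
end MooreStep

theorem moore_determinant {Fq K : Type*} [Field Fq] [Fintype Fq] [Field K] [Fintype K]
    [Algebra Fq K] (q m k : ℕ) (hq : Fintype.card Fq = q) (hm : 0 < m)
    (hK : Fintype.card K = q ^ m) (hk : 0 < k) (α : ℕ → K) :
    (Matrix.det (Matrix.of fun i j : Fin k => α (j:ℕ) ^ q ^ (i:ℕ)) =
      α 0 * ∏ j ∈ Finset.Ico 1 k, ∏ b : Fin j → Fq,
        (α j - ∑ i : Fin j, b i • α (i:ℕ))) ∧
    (IsUnit (Matrix.det (Matrix.of fun i j : Fin k => α (j:ℕ) ^ q ^ (i:ℕ))) ↔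
      LinearIndependent Fq (fun i : Fin k => α (i:ℕ))) := by
  classical
  subst hq
  have part1 : ∀ n : ℕ, 0 < n →
      Matrix.det (Matrix.of fun i j : Fin n => α (j:ℕ) ^ Fintype.card Fq ^ (i:ℕ)) =
      α 0 * ∏ j ∈ Finset.Ico 1 n, ∏ b : Fin j → Fq,
        (α j - ∑ i : Fin j, b i • α (i:ℕ)) := by
    intro n hn
    induction n with
    | zero => omega
    | succ n ih =>
      rcases Nat.eq_zero_or_pos n with rfl | hn'
      · simp [Matrix.det_fin_one]
      · rw [moore_step, ih hn', Finset.prod_Ico_succ_top (by omega), mul_assoc]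
  refine ⟨part1 k hk, ?_, ?_⟩
  · intro hu
    by_contra hdep
    rw [moore_det_eq_zero_of_dep k α hdep] at hu
    exact not_isUnit_zero hu
  · intro hind
    rw [isUnit_iff_ne_zero, part1 k hk]
    refine mul_ne_zero (hind.ne_zero ⟨0, hk⟩) ?_
    rw [Finset.prod_ne_zero_iff]
    intro j hj
    rw [Finset.prod_ne_zero_iff]
    intro b _
    rw [Finset.mem_Ico] at hj
    intro heq
    have heq' : (α j : K) = ∑ i : Fin j, b i • α (i:ℕ) := by
      have := sub_eq_zero.mp heq; exact this
    set F : ℕ → K := fun n =>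
      if h : n < j then b ⟨n, h⟩ • α n else if n = j then (-1 : Fq) • α n else 0 with hF
    set g : Fin k → Fq := fun i =>
      if h : (i:ℕ) < j then b ⟨(i:ℕ), h⟩ else if (i:ℕ) = j then -1 else 0 with hg
    have hgF : ∀ i : Fin k, g i • α (i:ℕ) = F (i:ℕ) := by
      intro i
      rw [hg, hF]
      by_cases h1 : (i:ℕ) < j
      · simp [h1]
      · by_cases h2 : (i:ℕ) = j <;> simp [h1, h2]
    have hsum : ∑ i : Fin k, g i • α (i:ℕ) = 0 := by
      rw [Finset.sum_congr rfl fun i _ => hgF i, Fin.sum_univ_eq_sum_range F k,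
        Finset.range_eq_Ico, ← Finset.sum_Ico_consecutive F (Nat.zero_le (j+1)) (by omega : j+1 ≤ k),
        ← Finset.range_eq_Ico, Finset.sum_range_succ]
      have e1 : ∑ n ∈ Finset.range j, F n = ∑ i : Fin j, b i • α (i:ℕ) := by
        rw [← Fin.sum_univ_eq_sum_range F j]
        refine Finset.sum_congr rfl fun i _ => ?_
        rw [hF]; simp [i.is_lt]
      have e2 : F j = -α j := by
        rw [hF]; simp
      have e3 : ∑ n ∈ Finset.Ico (j+1) k, F n = 0 := by
        refine Finset.sum_eq_zero fun n hn => ?_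
        rw [Finset.mem_Ico] at hn
        rw [hF]
        simp only [dif_neg (by omega : ¬ n < j), if_neg (by omega : ¬ n = j)]
      rw [e1, e2, e3, ← heq']
      ring
    have hzero := Fintype.linearIndependent_iff.mp hind g hsum ⟨j, hj.2⟩
    rw [hg] at hzero
    simp only [dif_neg (lt_irrefl j)] at hzero
    simp at hzero
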